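/- arXiv:2010.12487 — 2 statements merged into one kernel-verified Lean document; each statement's English description precedes it below -/
import Mathlib

section
/- Let d ≥ 2, ν > 0, let u_1,…,u_d be positive reals, let J ⊆ {1,…,d} have p elements, and let f : ℝ^d → ℝ be defined by f(x) = Π_{j∈J} 1{x_j > 0}. Let S be the LIME random subset of {1,…,d}, Σ = E[π ζ ζᵀ], Γ^f = E[π f(φ_S) ζ], and β^f = Σ⁻¹ Γ^f ∈ ℝ^{d+1}. Then β^f_0 = c_d⁻¹ (σ_0 α_p + p σ_1 α_p + (d−p) σ_1 α_{p+1}); for every j ∈ J, β^f_j = c_d⁻¹ (σ_1 α_p + σ_2 α_p + (d−p) σ_3 α_{p+1} + (p−1) σ_3 α_p); and for every j ∈ {1,…,d} \ J, β^f_j = c_d⁻¹ (σ_1 α_p + σ_2 α_{p+1} + (d−p−1) σ_3 α_{p+1} + p σ_3 α_p). -/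
noncomputable section

/-- The LIME weight function ψ_ν(t) = exp(−(1−√(1−t))²/(2ν²)). -/
def psi (ν t : ℝ) : ℝ := Real.exp (-(1 - Real.sqrt (1 - t)) ^ 2 / (2 * ν ^ 2))

/-- Expectation of `g S` where `S` is the LIME random subset of `{1,…,d}`:
first draw `s` uniformly in `{1,…,d}`, then `S` uniformly among subsets of cardinality `s`. -/
def limeExp (d : ℕ) (g : Finset (Fin d) → ℝ) : ℝ :=
  (1 / (d : ℝ)) * ∑ s ∈ Finset.Icc 1 d, ((d.choose s : ℝ))⁻¹ *
    ∑ S ∈ Finset.univ.filter (fun S : Finset (Fin d) => S.card = s), g S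

/-- The coefficient α_p(d,ν). -/
def alpha (d : ℕ) (ν : ℝ) (p : ℕ) : ℝ :=
  (1 / (d : ℝ)) * ∑ s ∈ Finset.Icc 1 d,
    (∏ k ∈ Finset.range p, (((d : ℝ) - (s : ℝ) - (k : ℝ)) / ((d : ℝ) - (k : ℝ)))) *
      psi ν ((s : ℝ) / (d : ℝ))

/-- The normalization constant c_d = (d−1)α₀α₂ − dα₁² + α₀α₁. -/
def cConst (d : ℕ) (ν : ℝ) : ℝ :=
  ((d : ℝ) - 1) * alpha d ν 0 * alpha d ν 2 - (d : ℝ) * (alpha d ν 1) ^ 2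
    + alpha d ν 0 * alpha d ν 1

/-- σ₀ = (d−1)α₂ + α₁. -/
def sigma0 (d : ℕ) (ν : ℝ) : ℝ := ((d : ℝ) - 1) * alpha d ν 2 + alpha d ν 1

/-- σ₁ = −α₁. -/
def sigma1 (d : ℕ) (ν : ℝ) : ℝ := -(alpha d ν 1)

/-- σ₂ = ((d−2)α₀α₂ − (d−1)α₁² + α₀α₁)/(α₁−α₂). -/
def sigma2 (d : ℕ) (ν : ℝ) : ℝ :=
  (((d : ℝ) - 2) * alpha d ν 0 * alpha d ν 2 - ((d : ℝ) - 1) * (alpha d ν 1) ^ 2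
      + alpha d ν 0 * alpha d ν 1) / (alpha d ν 1 - alpha d ν 2)

/-- σ₃ = (α₁² − α₀α₂)/(α₁−α₂). -/
def sigma3 (d : ℕ) (ν : ℝ) : ℝ :=
  ((alpha d ν 1) ^ 2 - alpha d ν 0 * alpha d ν 2) / (alpha d ν 1 - alpha d ν 2)

/-- Normalized TF-IDF of the perturbed document obtained by deleting the words
indexed by `S`: `(φ_S)_j = 1{j ∉ S} · u_j / √(∑_{k ∉ S} u_k²)`, and `φ_S = 0`
when all words are deleted. -/
def phiS {d : ℕ} (u : Fin d → ℝ) (S : Finset (Fin d)) : Fin d → ℝ :=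
  if S = Finset.univ then 0 else
    fun j => (if j ∉ S then (1 : ℝ) else 0) * u j / Real.sqrt (∑ k ∈ Sᶜ, (u k) ^ 2)

/-- The vector of interpretable features with a leading 1 for the intercept:
ζ(S) = (1, z₁, …, z_d) with z_j = 1{j ∉ S}. -/
def zeta (d : ℕ) (S : Finset (Fin d)) : Fin (d + 1) → ℝ :=
  Fin.cons 1 (fun j : Fin d => if j ∉ S then (1 : ℝ) else 0)

/-- Σ = E[π ζ ζᵀ] ∈ ℝ^{(d+1)×(d+1)}. -/
def SigmaE (d : ℕ) (ν : ℝ) : Matrix (Fin (d + 1)) (Fin (d + 1)) ℝ :=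
  Matrix.of fun a b =>
    limeExp d (fun S => psi ν ((S.card : ℝ) / (d : ℝ)) * zeta d S a * zeta d S b)

/-- β^f = Σ⁻¹ Γ^f, where Γ^f = E[π f(φ_S) ζ] and `g S` stands for `f (φ_S)`. -/
def betaF (d : ℕ) (ν : ℝ) (g : Finset (Fin d) → ℝ) : Fin (d + 1) → ℝ :=
  (SigmaE d ν)⁻¹.mulVec
    (fun a => limeExp d (fun S => psi ν ((S.card : ℝ) / (d : ℝ)) * g S * zeta d S a))

lemma myChooseRatio (d s p : ℕ) (hs1 : 1 ≤ s) (hsd : s ≤ d) (hp : p ≤ d) :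
    ((d.choose s : ℝ))⁻¹ * (((d - p).choose s : ℝ))
      = ∏ k ∈ Finset.range p, (((d : ℝ) - (s : ℝ) - (k : ℝ)) / ((d : ℝ) - (k : ℝ))) := by
  induction p with
  | zero =>
      simp only [Nat.sub_zero, Finset.range_zero, Finset.prod_empty]
      rw [inv_mul_cancel₀]
      exact_mod_cast (Nat.choose_pos hsd).ne'
  | succ p ih =>
      have hpd : p < d := hp
      set m := d - p with hm
      have hm1 : 1 ≤ m := by omega
      have hcast : ((d : ℝ) - (p : ℝ)) = (m : ℝ) := by
        rw [hm, Nat.cast_sub hpd.le]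
      have hm0 : (m : ℝ) ≠ 0 := by positivity
      have key : (((m - 1).choose s : ℝ)) * (m : ℝ) = ((m.choose s : ℝ)) * ((m : ℝ) - (s : ℝ)) := by
        rcases le_or_gt s m with hsm | hsm
        · have hnat : m * ((m - 1).choose s) = m.choose s * (m - s) := by
            have h1 : m - 1 + 1 = m := by omega
            have h2 := Nat.add_one_mul_choose_eq (m - 1) s
            rw [h1] at h2
            rw [h2, Nat.choose_succ_right_eq]
          have := congrArg (fun n : ℕ => (n : ℝ)) hnat
          push_cast [Nat.cast_sub hsm] at this
          linarith
        · have h1 : (m - 1).choose s = 0 := Nat.choose_eq_zero_of_lt (by omega)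
          have h2 : m.choose s = 0 := Nat.choose_eq_zero_of_lt hsm
          simp [h1, h2]
      rw [Finset.prod_range_succ, ← ih (by omega)]
      have hstep : (d : ℝ) - (s : ℝ) - (p : ℝ) = (m : ℝ) - (s : ℝ) := by
        rw [← hcast]; ring
      have hdp1 : d - (p + 1) = m - 1 := by omega
      rw [hdp1, hstep, hcast]
      have : (((m - 1).choose s : ℝ)) = ((m.choose s : ℝ)) * ((m : ℝ) - (s : ℝ)) / (m : ℝ) := by
        field_simp
        linear_combination key
      rw [this]
      ring

lemma myCount (d s : ℕ) (T : Finset (Fin d)) :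
    ∑ S ∈ Finset.univ.filter (fun S : Finset (Fin d) => S.card = s),
        (∏ j ∈ T, (if j ∉ S then (1 : ℝ) else 0))
      = (((d - T.card).choose s : ℝ)) := by
  have h1 : ∀ S : Finset (Fin d),
      (∏ j ∈ T, (if j ∉ S then (1 : ℝ) else 0)) = if (∀ j ∈ T, j ∉ S) then 1 else 0 :=
    fun S => by
      split_ifs with h
      · exact Finset.prod_eq_one (fun j hj => if_pos (h j hj))
      · push_neg at h
        obtain ⟨j, hj, hjS⟩ := h
        exact Finset.prod_eq_zero hj (by simp [hjS])
  rw [Finset.sum_congr rfl (fun S _ => h1 S), Finset.sum_boole]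
  have h2 : ((Finset.univ.filter (fun S : Finset (Fin d) => S.card = s)).filter
      (fun S => ∀ j ∈ T, j ∉ S)) = Finset.powersetCard s Tᶜ := by
    ext S
    simp only [Finset.mem_filter, Finset.mem_univ, true_and, Finset.mem_powersetCard]
    constructor
    · rintro ⟨hc, hs⟩
      refine ⟨fun x hx => Finset.mem_compl.2 (fun hxT => hs x hxT hx), hc⟩
    · rintro ⟨hsub, hc⟩
      exact ⟨hc, fun j hjT hjS => Finset.mem_compl.1 (hsub hjS) hjT⟩
  rw [h2, Finset.card_powersetCard, Finset.card_compl, Fintype.card_fin]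

lemma limeExp_prod (d : ℕ) (ν : ℝ) (T : Finset (Fin d)) :
    limeExp d (fun S => psi ν ((S.card : ℝ) / (d : ℝ)) * ∏ j ∈ T, (if j ∉ S then (1 : ℝ) else 0))
      = alpha d ν T.card := by
  unfold limeExp alpha
  congr 1
  apply Finset.sum_congr rfl
  intro s hs
  obtain ⟨hs1, hsd⟩ := Finset.mem_Icc.mp hs
  have hstep : ∀ S ∈ Finset.univ.filter (fun S : Finset (Fin d) => S.card = s),
      psi ν ((S.card : ℝ) / (d : ℝ)) * ∏ j ∈ T, (if j ∉ S then (1 : ℝ) else 0)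
        = psi ν ((s : ℝ) / (d : ℝ)) * ∏ j ∈ T, (if j ∉ S then (1 : ℝ) else 0) := by
    intro S hS
    rw [(Finset.mem_filter.mp hS).2]
  rw [Finset.sum_congr rfl hstep, ← Finset.mul_sum, myCount,
    ← myChooseRatio d s T.card hs1 hsd (by simpa using Finset.card_le_univ T)]
  ring

lemma alpha_zero_eq (d : ℕ) (ν : ℝ) :
    alpha d ν 0 = (1 / (d : ℝ)) * ∑ s ∈ Finset.Icc 1 d, psi ν ((s : ℝ) / (d : ℝ)) := by
  simp [alpha]

lemma alpha_one_eq (d : ℕ) (ν : ℝ) :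
    alpha d ν 1 = (1 / (d : ℝ)) * ∑ s ∈ Finset.Icc 1 d,
      (((d : ℝ) - (s : ℝ)) / (d : ℝ)) * psi ν ((s : ℝ) / (d : ℝ)) := by
  unfold alpha
  congr 1
  apply Finset.sum_congr rfl
  intro s _
  rw [Finset.prod_range_one]
  norm_num

lemma alpha_two_eq (d : ℕ) (ν : ℝ) :
    alpha d ν 2 = (1 / (d : ℝ)) * ∑ s ∈ Finset.Icc 1 d,
      ((((d : ℝ) - (s : ℝ)) * ((d : ℝ) - (s : ℝ) - 1)) / ((d : ℝ) * ((d : ℝ) - 1)))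
        * psi ν ((s : ℝ) / (d : ℝ)) := by
  unfold alpha
  congr 1
  apply Finset.sum_congr rfl
  intro s _
  rw [Finset.prod_range_succ, Finset.prod_range_one]
  push_cast
  rw [sub_zero, sub_zero, div_mul_div_comm]

lemma alpha12_sub_pos (d : ℕ) (hd : 2 ≤ d) (ν : ℝ) :
    0 < alpha d ν 1 - alpha d ν 2 := by
  have hd0 : (0 : ℝ) < (d : ℝ) := by positivity
  have hd1 : (0 : ℝ) < (d : ℝ) - 1 := by
    have : (2 : ℝ) ≤ (d : ℝ) := by exact_mod_cast hd
    linarith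
  rw [alpha_one_eq, alpha_two_eq, ← mul_sub, ← Finset.sum_sub_distrib]
  have hpt : ∀ s ∈ Finset.Icc 1 d,
      (((d : ℝ) - (s : ℝ)) / (d : ℝ)) * psi ν ((s : ℝ) / (d : ℝ))
        - ((((d : ℝ) - (s : ℝ)) * ((d : ℝ) - (s : ℝ) - 1)) / ((d : ℝ) * ((d : ℝ) - 1)))
            * psi ν ((s : ℝ) / (d : ℝ))
      = ((s : ℝ) * ((d : ℝ) - (s : ℝ)) / ((d : ℝ) * ((d : ℝ) - 1)))
          * psi ν ((s : ℝ) / (d : ℝ)) := by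
    intro s _
    have hd0' : (d : ℝ) ≠ 0 := hd0.ne'
    have hd1' : (d : ℝ) - 1 ≠ 0 := hd1.ne'
    field_simp
    ring
  rw [Finset.sum_congr rfl hpt]
  apply mul_pos (by positivity)
  apply Finset.sum_pos'
  · intro s hs
    obtain ⟨hs1, hsd⟩ := Finset.mem_Icc.mp hs
    have h1 : (0 : ℝ) ≤ (s : ℝ) := by positivity
    have h2 : (0 : ℝ) ≤ (d : ℝ) - (s : ℝ) := by
      have : (s : ℝ) ≤ (d : ℝ) := by exact_mod_cast hsd
      linarith
    have h3 : (0 : ℝ) < psi ν ((s : ℝ) / (d : ℝ)) := Real.exp_pos _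
    positivity
  · refine ⟨1, Finset.mem_Icc.mpr ⟨le_refl 1, by omega⟩, ?_⟩
    have h3 : (0 : ℝ) < psi ν ((1 : ℕ) / (d : ℝ)) := Real.exp_pos _
    have : (0:ℝ) < (1:ℕ) * ((d : ℝ) - ((1:ℕ) : ℝ)) / ((d : ℝ) * ((d : ℝ) - 1)) := by
      push_cast
      rw [one_mul]
      positivity
    positivity

lemma cConst_pos (d : ℕ) (hd : 2 ≤ d) (ν : ℝ) : 0 < cConst d ν := by
  have hd0 : (0 : ℝ) < (d : ℝ) := by positivity
  have hd0' : (d : ℝ) ≠ 0 := hd0.ne'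
  have hd1 : (0 : ℝ) < (d : ℝ) - 1 := by
    have : (2 : ℝ) ≤ (d : ℝ) := by exact_mod_cast hd
    linarith
  have hd1' : (d : ℝ) - 1 ≠ 0 := hd1.ne'
  set I := Finset.Icc 1 d with hI
  have hwpos : ∀ s : ℕ, 0 < psi ν ((s : ℝ) / (d : ℝ)) := fun s => Real.exp_pos _
  have hA : cConst d ν = ∑ s ∈ I, ∑ t ∈ I,
      (psi ν ((s : ℝ) / (d : ℝ)) * psi ν ((t : ℝ) / (d : ℝ))
        * (((d : ℝ) - (t : ℝ)) * ((s : ℝ) - (t : ℝ))) / (d : ℝ) ^ 3) := by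
    rw [cConst, alpha_zero_eq, alpha_one_eq, alpha_two_eq]
    have e : ∀ A B C : ℝ, ((d : ℝ) - 1) * ((1 / (d : ℝ)) * A) * ((1 / (d : ℝ)) * B)
        - (d : ℝ) * ((1 / (d : ℝ)) * C) ^ 2 + ((1 / (d : ℝ)) * A) * ((1 / (d : ℝ)) * C)
        = (((d : ℝ) - 1) / (d : ℝ) ^ 2) * (A * B) - (1 / (d : ℝ)) * (C * C)
          + (1 / (d : ℝ) ^ 2) * (A * C) := by
      intros; field_simp
    rw [e]
    rw [Finset.sum_mul_sum, Finset.sum_mul_sum, Finset.sum_mul_sum,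
      Finset.mul_sum, Finset.mul_sum, Finset.mul_sum,
      ← Finset.sum_sub_distrib, ← Finset.sum_add_distrib]
    apply Finset.sum_congr rfl
    intro s _
    rw [Finset.mul_sum, Finset.mul_sum, Finset.mul_sum,
      ← Finset.sum_sub_distrib, ← Finset.sum_add_distrib]
    apply Finset.sum_congr rfl
    intro t _
    field_simp
    ring
  have hswap : (∑ s ∈ I, ∑ t ∈ I,
        (psi ν ((s : ℝ) / (d : ℝ)) * psi ν ((t : ℝ) / (d : ℝ))
          * (((d : ℝ) - (t : ℝ)) * ((s : ℝ) - (t : ℝ))) / (d : ℝ) ^ 3))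
      = ∑ s ∈ I, ∑ t ∈ I,
        (psi ν ((t : ℝ) / (d : ℝ)) * psi ν ((s : ℝ) / (d : ℝ))
          * (((d : ℝ) - (s : ℝ)) * ((t : ℝ) - (s : ℝ))) / (d : ℝ) ^ 3) :=
    Finset.sum_comm
  have hsum : cConst d ν + cConst d ν = ∑ s ∈ I, ∑ t ∈ I,
      (psi ν ((s : ℝ) / (d : ℝ)) * psi ν ((t : ℝ) / (d : ℝ))
        * ((s : ℝ) - (t : ℝ)) ^ 2 / (d : ℝ) ^ 3) := by
    rw [hA]
    nth_rewrite 2 [hswap]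
    rw [← Finset.sum_add_distrib]
    apply Finset.sum_congr rfl
    intro s _
    rw [← Finset.sum_add_distrib]
    apply Finset.sum_congr rfl
    intro t _
    ring
  have hpos : 0 < ∑ s ∈ I, ∑ t ∈ I,
      (psi ν ((s : ℝ) / (d : ℝ)) * psi ν ((t : ℝ) / (d : ℝ))
        * ((s : ℝ) - (t : ℝ)) ^ 2 / (d : ℝ) ^ 3) := by
    apply Finset.sum_pos'
    · intro s _
      apply Finset.sum_nonneg
      intro t _
      have h1 := hwpos s
      have h2 := hwpos t
      positivity
    · refine ⟨1, Finset.mem_Icc.mpr ⟨le_refl 1, by omega⟩, ?_⟩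
      apply Finset.sum_pos'
      · intro t _
        have h1 := hwpos 1
        have h2 := hwpos t
        positivity
      · refine ⟨2, Finset.mem_Icc.mpr ⟨by omega, hd⟩, ?_⟩
        have h1 := hwpos 1
        have h2 := hwpos 2
        have h3 : (((1:ℕ):ℝ) - ((2:ℕ):ℝ)) ^ 2 = 1 := by norm_num
        rw [h3]
        positivity
  linarith

lemma phiS_pos_iff {d : ℕ} (u : Fin d → ℝ) (hu : ∀ k, 0 < u k) (S : Finset (Fin d))
    (j : Fin d) : (0 < phiS u S j) ↔ j ∉ S := by
  unfold phiS
  by_cases h : S = Finset.univ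
  · subst h
    simp
  · rw [if_neg h]
    have hne : Sᶜ.Nonempty :=
      Finset.nonempty_iff_ne_empty.mpr (fun hc => h ((Finset.compl_eq_empty_iff S).mp hc))
    have hs : 0 < Real.sqrt (∑ k ∈ Sᶜ, (u k) ^ 2) :=
      Real.sqrt_pos.mpr (Finset.sum_pos (fun k _ => pow_pos (hu k) 2) hne)
    by_cases hj : j ∈ S
    · simp [hj]
    · simp only [hj, not_false_iff, if_pos, one_mul, iff_true]
      exact div_pos (hu j) hs

lemma limeExp_congr {d : ℕ} {f g : Finset (Fin d) → ℝ} (h : ∀ S, f S = g S) :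
    limeExp d f = limeExp d g := by
  unfold limeExp
  congr 1
  apply Finset.sum_congr rfl
  intro s _
  congr 1
  exact Finset.sum_congr rfl (fun S _ => h S)

lemma SigmaE_apply (d : ℕ) (ν : ℝ) (a b : Fin (d + 1)) :
    SigmaE d ν a b
      = limeExp d (fun S => psi ν ((S.card : ℝ) / (d : ℝ)) * zeta d S a * zeta d S b) := rfl

lemma zeta_zero (d : ℕ) (S : Finset (Fin d)) : zeta d S 0 = 1 := rfl

lemma zeta_succ (d : ℕ) (S : Finset (Fin d)) (j : Fin d) :
    zeta d S j.succ = (if j ∉ S then (1 : ℝ) else 0) := by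
  simp [zeta]

lemma SigmaE_00 (d : ℕ) (ν : ℝ) : SigmaE d ν 0 0 = alpha d ν 0 := by
  rw [SigmaE_apply]
  have h1 : limeExp d (fun S => psi ν ((S.card : ℝ) / (d : ℝ)) * zeta d S 0 * zeta d S 0)
      = limeExp d (fun S => psi ν ((S.card : ℝ) / (d : ℝ))
          * ∏ i ∈ (∅ : Finset (Fin d)), (if i ∉ S then (1 : ℝ) else 0)) :=
    limeExp_congr (fun S => by simp [zeta_zero])
  rw [h1, limeExp_prod, Finset.card_empty]

lemma SigmaE_0succ (d : ℕ) (ν : ℝ) (j : Fin d) : SigmaE d ν 0 j.succ = alpha d ν 1 := by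
  rw [SigmaE_apply]
  have h1 : limeExp d (fun S => psi ν ((S.card : ℝ) / (d : ℝ)) * zeta d S 0 * zeta d S j.succ)
      = limeExp d (fun S => psi ν ((S.card : ℝ) / (d : ℝ))
          * ∏ i ∈ ({j} : Finset (Fin d)), (if i ∉ S then (1 : ℝ) else 0)) :=
    limeExp_congr (fun S => by
      rw [zeta_zero, zeta_succ, Finset.prod_singleton, mul_one])
  rw [h1, limeExp_prod, Finset.card_singleton]

lemma SigmaE_succ0 (d : ℕ) (ν : ℝ) (j : Fin d) : SigmaE d ν j.succ 0 = alpha d ν 1 := by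
  rw [SigmaE_apply]
  have h1 : limeExp d (fun S => psi ν ((S.card : ℝ) / (d : ℝ)) * zeta d S j.succ * zeta d S 0)
      = limeExp d (fun S => psi ν ((S.card : ℝ) / (d : ℝ))
          * ∏ i ∈ ({j} : Finset (Fin d)), (if i ∉ S then (1 : ℝ) else 0)) :=
    limeExp_congr (fun S => by
      rw [zeta_zero, zeta_succ, Finset.prod_singleton, mul_one])
  rw [h1, limeExp_prod, Finset.card_singleton]

lemma SigmaE_succ_same (d : ℕ) (ν : ℝ) (j : Fin d) :
    SigmaE d ν j.succ j.succ = alpha d ν 1 := by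
  rw [SigmaE_apply]
  have h1 : limeExp d (fun S => psi ν ((S.card : ℝ) / (d : ℝ)) * zeta d S j.succ * zeta d S j.succ)
      = limeExp d (fun S => psi ν ((S.card : ℝ) / (d : ℝ))
          * ∏ i ∈ ({j} : Finset (Fin d)), (if i ∉ S then (1 : ℝ) else 0)) :=
    limeExp_congr (fun S => by by_cases hj : j ∈ S <;> simp [zeta_succ, hj])
  rw [h1, limeExp_prod, Finset.card_singleton]

lemma SigmaE_succ_ne (d : ℕ) (ν : ℝ) (j k : Fin d) (hjk : j ≠ k) :
    SigmaE d ν j.succ k.succ = alpha d ν 2 := by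
  rw [SigmaE_apply]
  have h1 : limeExp d (fun S => psi ν ((S.card : ℝ) / (d : ℝ)) * zeta d S j.succ * zeta d S k.succ)
      = limeExp d (fun S => psi ν ((S.card : ℝ) / (d : ℝ))
          * ∏ i ∈ ({j, k} : Finset (Fin d)), (if i ∉ S then (1 : ℝ) else 0)) :=
    limeExp_congr (fun S => by rw [Finset.prod_pair hjk, zeta_succ, zeta_succ, mul_assoc])
  rw [h1, limeExp_prod, Finset.card_pair hjk]

lemma row_zero (d : ℕ) (ν : ℝ) (v : Fin (d + 1) → ℝ) :
    ∑ x : Fin (d + 1), SigmaE d ν 0 x * v x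
      = alpha d ν 0 * v 0 + alpha d ν 1 * ∑ j : Fin d, v j.succ := by
  rw [Fin.sum_univ_succ, SigmaE_00, Finset.mul_sum]
  congr 1
  apply Finset.sum_congr rfl
  intro j _
  rw [SigmaE_0succ]

lemma row_succ (d : ℕ) (ν : ℝ) (j : Fin d) (v : Fin (d + 1) → ℝ) :
    ∑ x : Fin (d + 1), SigmaE d ν j.succ x * v x
      = alpha d ν 1 * v 0 + (alpha d ν 1 - alpha d ν 2) * v j.succ
        + alpha d ν 2 * ∑ k : Fin d, v k.succ := by
  rw [Fin.sum_univ_succ, SigmaE_succ0]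
  have h1 : ∀ k : Fin d, SigmaE d ν j.succ k.succ * v k.succ
      = (if k = j then (alpha d ν 1 - alpha d ν 2) * v k.succ else 0)
        + alpha d ν 2 * v k.succ := by
    intro k
    by_cases hk : k = j
    · subst hk
      rw [if_pos rfl, SigmaE_succ_same]
      ring
    · rw [if_neg hk, SigmaE_succ_ne d ν j k (fun h => hk h.symm)]
      ring
  rw [Finset.sum_congr rfl (fun k _ => h1 k), Finset.sum_add_distrib,
    Fintype.sum_ite_eq', ← Finset.mul_sum]
  ring

lemma sum_ite_mem_const (d : ℕ) (J : Finset (Fin d)) (x y : ℝ) :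
    ∑ j : Fin d, (if j ∈ J then x else y)
      = (J.card : ℝ) * x + ((d : ℝ) - (J.card : ℝ)) * y := by
  rw [Finset.sum_ite, Finset.sum_const, Finset.sum_const]
  have h1 : (Finset.univ.filter (fun j : Fin d => j ∈ J)) = J := by ext j; simp
  have h2 : (Finset.univ.filter (fun j : Fin d => ¬ j ∈ J)) = Jᶜ := by ext j; simp
  have hle : J.card ≤ d := by
    simpa [Finset.card_univ] using Finset.card_le_univ J
  rw [h1, h2, Finset.card_compl, Fintype.card_fin, nsmul_eq_mul, nsmul_eq_mul,
    Nat.cast_sub hle]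

lemma sum_ite_eq_mul' (d : ℕ) (j : Fin d) (X Y : ℝ) (G : Fin d → ℝ) :
    ∑ k : Fin d, (if j = k then X else Y) * G k
      = (X - Y) * G j + Y * ∑ k : Fin d, G k := by
  have h1 : ∀ k : Fin d, (if j = k then X else Y) * G k
      = (if j = k then (X - Y) * G k else 0) + Y * G k := by
    intro k; split_ifs <;> ring
  rw [Finset.sum_congr rfl (fun k _ => h1 k), Finset.sum_add_distrib,
    Fintype.sum_ite_eq, ← Finset.mul_sum]

def Ninv (d : ℕ) (ν : ℝ) : Matrix (Fin (d + 1)) (Fin (d + 1)) ℝ :=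
  Matrix.of fun a b =>
    (cConst d ν)⁻¹ * (if a = 0 then (if b = 0 then sigma0 d ν else sigma1 d ν)
      else if b = 0 then sigma1 d ν else if a = b then sigma2 d ν else sigma3 d ν)

lemma Ninv_00 (d : ℕ) (ν : ℝ) : Ninv d ν 0 0 = (cConst d ν)⁻¹ * sigma0 d ν := by
  simp [Ninv]

lemma Ninv_0succ (d : ℕ) (ν : ℝ) (k : Fin d) :
    Ninv d ν 0 k.succ = (cConst d ν)⁻¹ * sigma1 d ν := by
  simp [Ninv, Fin.succ_ne_zero]

lemma Ninv_succ0 (d : ℕ) (ν : ℝ) (j : Fin d) :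
    Ninv d ν j.succ 0 = (cConst d ν)⁻¹ * sigma1 d ν := by
  simp [Ninv, Fin.succ_ne_zero j]

lemma Ninv_succ_succ (d : ℕ) (ν : ℝ) (j k : Fin d) :
    Ninv d ν j.succ k.succ
      = (cConst d ν)⁻¹ * (if j = k then sigma2 d ν else sigma3 d ν) := by
  simp [Ninv, Fin.succ_ne_zero, Fin.succ_inj]

lemma SigmaE_mul_Ninv (d : ℕ) (hd : 2 ≤ d) (ν : ℝ) : SigmaE d ν * Ninv d ν = 1 := by
  have h12 : alpha d ν 1 - alpha d ν 2 ≠ 0 := (alpha12_sub_pos d hd ν).ne'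
  have hc : cConst d ν ≠ 0 := (cConst_pos d hd ν).ne'
  ext a b
  rw [Matrix.mul_apply, Matrix.one_apply]
  induction b using Fin.cases with
  | zero =>
      have hsum : ∑ j : Fin d, Ninv d ν j.succ 0
          = (d : ℝ) * ((cConst d ν)⁻¹ * sigma1 d ν) := by
        rw [Finset.sum_congr rfl (fun j _ => Ninv_succ0 d ν j), Finset.sum_const,
          Finset.card_univ, Fintype.card_fin, nsmul_eq_mul]
      induction a using Fin.cases with
      | zero =>
          rw [row_zero d ν (fun x => Ninv d ν x 0), Ninv_00, hsum, if_pos rfl]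
          rw [sigma0, sigma1]
          field_simp
          rw [cConst]
          ring
      | succ j =>
          rw [row_succ d ν j (fun x => Ninv d ν x 0), Ninv_00, Ninv_succ0, hsum,
            if_neg (Fin.succ_ne_zero j)]
          rw [sigma0, sigma1]
          field_simp
          ring
  | succ k =>
      have hsum : ∑ j : Fin d, Ninv d ν j.succ k.succ
          = (cConst d ν)⁻¹ * sigma2 d ν
            + ((d : ℝ) - 1) * ((cConst d ν)⁻¹ * sigma3 d ν) := by
        rw [Finset.sum_congr rfl (fun j _ => Ninv_succ_succ d ν j k)]
        have h1 : ∀ j : Fin d, (cConst d ν)⁻¹ * (if j = k then sigma2 d ν else sigma3 d ν)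
            = (if j = k then (cConst d ν)⁻¹ * sigma2 d ν else (cConst d ν)⁻¹ * sigma3 d ν) := by
          intro j; split_ifs <;> rfl
        rw [Finset.sum_congr rfl (fun j _ => h1 j)]
        have h2 := sum_ite_eq_mul' d k ((cConst d ν)⁻¹ * sigma2 d ν)
          ((cConst d ν)⁻¹ * sigma3 d ν) (fun _ => (1 : ℝ))
        simp only [mul_one, eq_comm] at h2
        have h3 : ∀ j : Fin d, (if j = k then (cConst d ν)⁻¹ * sigma2 d ν
            else (cConst d ν)⁻¹ * sigma3 d ν)
            = (if k = j then (cConst d ν)⁻¹ * sigma2 d ν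
              else (cConst d ν)⁻¹ * sigma3 d ν) * (fun _ => (1 : ℝ)) j := by
          intro j
          simp only [mul_one]
          congr 1
          simp [eq_comm]
        rw [Finset.sum_congr rfl (fun j _ => h3 j), sum_ite_eq_mul']
        simp only [mul_one, Finset.sum_const, Finset.card_univ, Fintype.card_fin,
          nsmul_eq_mul]
        ring
      induction a using Fin.cases with
      | zero =>
          rw [row_zero d ν (fun x => Ninv d ν x k.succ), Ninv_0succ, hsum,
            if_neg (fun h => (Fin.succ_ne_zero k) h.symm)]
          rw [sigma1, sigma2, sigma3]
          field_simp
          ring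
      | succ j =>
          rw [row_succ d ν j (fun x => Ninv d ν x k.succ), Ninv_0succ, Ninv_succ_succ, hsum]
          by_cases hjk : j = k
          · rw [if_pos hjk, if_pos (by rw [hjk])]
            rw [sigma1, sigma2, sigma3]
            field_simp
            rw [cConst]
            ring
          · rw [if_neg hjk, if_neg (fun h => hjk (Fin.succ_inj.mp h))]
            rw [sigma1, sigma2, sigma3]
            field_simp
            ring

/-- expression of β^f for a product of indicator functions
f(x) = ∏_{j∈J} 1{x_j > 0}, with p = |J|. -/
theorem betaF_indicator_product (d : ℕ) (hd : 2 ≤ d) (ν : ℝ) (hν : 0 < ν)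
    (u : Fin d → ℝ) (hu : ∀ k, 0 < u k) (J : Finset (Fin d)) :
    betaF d ν (fun S => ∏ j ∈ J, (if 0 < phiS u S j then (1 : ℝ) else 0)) 0
        = (cConst d ν)⁻¹ *
          (sigma0 d ν * alpha d ν J.card + (J.card : ℝ) * sigma1 d ν * alpha d ν J.card
            + ((d : ℝ) - (J.card : ℝ)) * sigma1 d ν * alpha d ν (J.card + 1))
      ∧ (∀ j ∈ J,
        betaF d ν (fun S => ∏ j ∈ J, (if 0 < phiS u S j then (1 : ℝ) else 0)) j.succ
          = (cConst d ν)⁻¹ *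
            (sigma1 d ν * alpha d ν J.card + sigma2 d ν * alpha d ν J.card
              + ((d : ℝ) - (J.card : ℝ)) * sigma3 d ν * alpha d ν (J.card + 1)
              + ((J.card : ℝ) - 1) * sigma3 d ν * alpha d ν J.card))
      ∧ (∀ j : Fin d, j ∉ J →
        betaF d ν (fun S => ∏ j ∈ J, (if 0 < phiS u S j then (1 : ℝ) else 0)) j.succ
          = (cConst d ν)⁻¹ *
            (sigma1 d ν * alpha d ν J.card + sigma2 d ν * alpha d ν (J.card + 1)
              + ((d : ℝ) - (J.card : ℝ) - 1) * sigma3 d ν * alpha d ν (J.card + 1)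
              + (J.card : ℝ) * sigma3 d ν * alpha d ν J.card)) := by
  have hg : ∀ S : Finset (Fin d),
      (∏ j ∈ J, (if 0 < phiS u S j then (1 : ℝ) else 0))
        = ∏ j ∈ J, (if j ∉ S then (1 : ℝ) else 0) := by
    intro S
    apply Finset.prod_congr rfl
    intro j _
    by_cases hj : j ∉ S
    · rw [if_pos ((phiS_pos_iff u hu S j).mpr hj), if_pos hj]
    · rw [if_neg (fun hp => hj ((phiS_pos_iff u hu S j).mp hp)), if_neg hj]
  have hG0 : limeExp d (fun S => psi ν ((S.card : ℝ) / (d : ℝ))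
        * (∏ j ∈ J, (if 0 < phiS u S j then (1 : ℝ) else 0)) * zeta d S 0)
      = alpha d ν J.card := by
    have h1 : limeExp d (fun S => psi ν ((S.card : ℝ) / (d : ℝ))
          * (∏ j ∈ J, (if 0 < phiS u S j then (1 : ℝ) else 0)) * zeta d S 0)
        = limeExp d (fun S => psi ν ((S.card : ℝ) / (d : ℝ))
            * ∏ j ∈ J, (if j ∉ S then (1 : ℝ) else 0)) :=
      limeExp_congr (fun S => by rw [hg S, zeta_zero, mul_one])
    rw [h1, limeExp_prod]
  have hGsucc : ∀ j : Fin d, limeExp d (fun S => psi ν ((S.card : ℝ) / (d : ℝ))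
        * (∏ i ∈ J, (if 0 < phiS u S i then (1 : ℝ) else 0)) * zeta d S j.succ)
      = (if j ∈ J then alpha d ν J.card else alpha d ν (J.card + 1)) := by
    intro j
    by_cases hj : j ∈ J
    · rw [if_pos hj]
      have hprod : ∀ S : Finset (Fin d),
          (∏ i ∈ J, (if i ∉ S then (1 : ℝ) else 0)) * (if j ∉ S then (1 : ℝ) else 0)
            = ∏ i ∈ J, (if i ∉ S then (1 : ℝ) else 0) := by
        intro S
        conv_lhs => rw [← Finset.prod_erase_mul J _ hj]
        rw [← Finset.prod_erase_mul J _ hj, mul_assoc]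
        congr 1
        split_ifs <;> ring
      have h1 : limeExp d (fun S => psi ν ((S.card : ℝ) / (d : ℝ))
            * (∏ i ∈ J, (if 0 < phiS u S i then (1 : ℝ) else 0)) * zeta d S j.succ)
          = limeExp d (fun S => psi ν ((S.card : ℝ) / (d : ℝ))
              * ∏ i ∈ J, (if i ∉ S then (1 : ℝ) else 0)) :=
        limeExp_congr (fun S => by rw [hg S, zeta_succ, mul_assoc, hprod S])
      rw [h1, limeExp_prod]
    · rw [if_neg hj]
      have hprod : ∀ S : Finset (Fin d),
          (∏ i ∈ J, (if i ∉ S then (1 : ℝ) else 0)) * (if j ∉ S then (1 : ℝ) else 0)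
            = ∏ i ∈ insert j J, (if i ∉ S then (1 : ℝ) else 0) := by
        intro S
        rw [Finset.prod_insert hj, mul_comm]
      have h1 : limeExp d (fun S => psi ν ((S.card : ℝ) / (d : ℝ))
            * (∏ i ∈ J, (if 0 < phiS u S i then (1 : ℝ) else 0)) * zeta d S j.succ)
          = limeExp d (fun S => psi ν ((S.card : ℝ) / (d : ℝ))
              * ∏ i ∈ insert j J, (if i ∉ S then (1 : ℝ) else 0)) :=
        limeExp_congr (fun S => by rw [hg S, zeta_succ, mul_assoc, hprod S])
      rw [h1, limeExp_prod, Finset.card_insert_of_notMem hj]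
  have hNinv : (SigmaE d ν)⁻¹ = Ninv d ν :=
    Matrix.inv_eq_right_inv (SigmaE_mul_Ninv d hd ν)
  have hsumG : ∑ k : Fin d, (if k ∈ J then alpha d ν J.card else alpha d ν (J.card + 1))
      = (J.card : ℝ) * alpha d ν J.card
        + ((d : ℝ) - (J.card : ℝ)) * alpha d ν (J.card + 1) :=
    sum_ite_mem_const d J _ _
  have hmv : ∀ a : Fin (d + 1),
      betaF d ν (fun S => ∏ j ∈ J, (if 0 < phiS u S j then (1 : ℝ) else 0)) a
        = ∑ x : Fin (d + 1), Ninv d ν a x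
            * limeExp d (fun S => psi ν ((S.card : ℝ) / (d : ℝ))
                * (∏ j ∈ J, (if 0 < phiS u S j then (1 : ℝ) else 0)) * zeta d S x) := by
    intro a
    rw [betaF, hNinv]
    rfl
  refine ⟨?_, ?_, ?_⟩
  · rw [hmv 0, Fin.sum_univ_succ, hG0, Ninv_00]
    rw [Finset.sum_congr rfl (fun j _ => by rw [Ninv_0succ, hGsucc j]),
      ← Finset.mul_sum, hsumG]
    ring
  · intro j hj
    rw [hmv j.succ, Fin.sum_univ_succ, hG0, Ninv_succ0]
    rw [Finset.sum_congr rfl (fun k _ => by rw [Ninv_succ_succ, hGsucc k, mul_assoc]),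
      ← Finset.mul_sum, sum_ite_eq_mul' d j (sigma2 d ν) (sigma3 d ν), if_pos hj, hsumG]
    ring
  · intro j hj
    rw [hmv j.succ, Fin.sum_univ_succ, hG0, Ninv_succ0]
    rw [Finset.sum_congr rfl (fun k _ => by rw [Ninv_succ_succ, hGsucc k, mul_assoc]),
      ← Finset.mul_sum, sum_ite_eq_mul' d j (sigma2 d ν) (sigma3 d ν), if_neg hj, hsumG]
    ring
end
end

section
/- Let d ≥ 1 and let j_1,…,j_p be p distinct indices in {1,…,d} with 0 ≤ p ≤ d. Let S be the LIME random subset of {1,…,d}. Then P(j_1 ∉ S, …, j_p ∉ S) = (d−p)/((p+1)d). Equivalently, (1/d) · Σ_{s=1}^d Π_{k=0}^{p−1} (d−s−k)/(d−k) = (d−p)/((p+1)d). -/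
noncomputable section

/-- Real version of `Nat.choose_succ_right_eq`, valid for all `m p`. -/
lemma key1 (m p : ℕ) : (m.choose (p + 1) : ℝ) * (p + 1) = (m.choose p : ℝ) * ((m : ℝ) - p) := by
  rcases le_or_gt p m with h | h
  · have hn := Nat.choose_succ_right_eq m p
    have hc : ((m - p : ℕ) : ℝ) = (m : ℝ) - p := by
      exact Nat.cast_sub h
    rw [← hc]
    exact_mod_cast hn
  · rw [Nat.choose_eq_zero_of_lt h, Nat.choose_eq_zero_of_lt (h.trans (Nat.lt_succ_self _))]
    simp

/-- The falling-factorial product equals a ratio of binomial coefficients. -/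
lemma prodLemma (d s p : ℕ) (hs : s ≤ d) (hp : p ≤ d) :
    ∏ k ∈ Finset.range p, (((d : ℝ) - (s : ℝ) - (k : ℝ)) / ((d : ℝ) - (k : ℝ)))
      = ((d - s).choose p : ℝ) / (d.choose p : ℝ) := by
  induction p with
  | zero => simp
  | succ p ih =>
      have hp' : p ≤ d := Nat.le_of_succ_le hp
      have hcast : ((d - s : ℕ) : ℝ) = (d : ℝ) - s := by
        exact Nat.cast_sub hs
      have h2 : ((d - s).choose (p + 1) : ℝ) * (p + 1)
          = ((d - s).choose p : ℝ) * ((d : ℝ) - s - p) := by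
        have := key1 (d - s) p
        rw [hcast] at this; linarith [this]
      have h1 := key1 d p
      rw [Finset.prod_range_succ, ih hp']
      rw [div_mul_div_comm, ← h2, ← h1, mul_div_mul_right]
      positivity

/-- Cross identity of binomial coefficients. -/
lemma crossLemma (d s p : ℕ) : d.choose s * (d - s).choose p = d.choose p * (d - p).choose s := by
  rcases le_or_gt (s + p) d with h | h
  · have h1 := Nat.choose_mul (n := d) (k := s + p) (s := s) (Nat.le_add_right s p)
    have h2 := Nat.choose_mul (n := d) (k := s + p) (s := p) (Nat.le_add_left p s)
    rw [Nat.add_sub_cancel_left] at h1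
    rw [Nat.add_sub_cancel] at h2
    rw [← h1, Nat.choose_symm_add, h2]
  · rcases le_or_gt s d with hs | hs
    · rcases le_or_gt p d with hp | hp
      · rw [Nat.choose_eq_zero_of_lt (show d - s < p by omega),
          Nat.choose_eq_zero_of_lt (show d - p < s by omega)]
        simp
      · rw [Nat.choose_eq_zero_of_lt hp, Nat.choose_eq_zero_of_lt (show d - s < p by omega)]
        simp
    · rw [Nat.choose_eq_zero_of_lt hs, Nat.choose_eq_zero_of_lt (show d - p < s by omega)]
      simp

/-- Hockey-stick style sum. -/
lemma sumD (d p : ℕ) : ∑ s ∈ Finset.Icc 1 d, (d - s).choose p = d.choose (p + 1) := by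
  have h1 : ∑ s ∈ Finset.Icc 1 d, (d - s).choose p = ∑ t ∈ Finset.range d, t.choose p := by
    apply Finset.sum_nbij' (i := fun s => d - s) (j := fun t => d - t)
    · intro s hs
      simp only [Finset.mem_Icc] at hs
      simp only [Finset.mem_range]; omega
    · intro t ht
      simp only [Finset.mem_range] at ht
      simp only [Finset.mem_Icc]; omega
    · intro s hs
      simp only [Finset.mem_Icc] at hs; omega
    · intro t ht
      simp only [Finset.mem_range] at ht; omega
    · intro s hs; rfl
  rw [h1]
  rcases Nat.eq_zero_or_pos d with hd0 | hd0
  · subst hd0; simp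
  have h2 : ∑ t ∈ Finset.Icc p (d - 1), t.choose p = ∑ t ∈ Finset.range d, t.choose p := by
    apply Finset.sum_subset
    · intro x hx
      simp only [Finset.mem_Icc] at hx
      simp only [Finset.mem_range]; omega
    · intro x hx hx'
      simp only [Finset.mem_range] at hx
      simp only [Finset.mem_Icc] at hx'
      exact Nat.choose_eq_zero_of_lt (by omega)
  rw [← h2, Nat.sum_Icc_choose]
  congr 1; omega

/-- for the LIME random subset S and a set J of p distinct indices,
P(∀ j ∈ J, j ∉ S) = (d−p)/((p+1)d); equivalently,
(1/d)·∑_{s=1}^d ∏_{k=0}^{p−1}(d−s−k)/(d−k) = (d−p)/((p+1)d). -/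
theorem lime_avoid_prob (d : ℕ) (hd : 1 ≤ d) (J : Finset (Fin d)) :
    limeExp d (fun S => if ∀ j ∈ J, j ∉ S then (1 : ℝ) else 0)
        = ((d : ℝ) - (J.card : ℝ)) / (((J.card : ℝ) + 1) * (d : ℝ))
      ∧ (1 / (d : ℝ)) * ∑ s ∈ Finset.Icc 1 d,
          ∏ k ∈ Finset.range J.card, (((d : ℝ) - (s : ℝ) - (k : ℝ)) / ((d : ℝ) - (k : ℝ)))
        = ((d : ℝ) - (J.card : ℝ)) / (((J.card : ℝ) + 1) * (d : ℝ)) := by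
  set p := J.card with hpdef
  have hp : p ≤ d := by
    have := Finset.card_le_univ J
    simpa [hpdef] using this
  have hdR : (d : ℝ) ≠ 0 := by positivity
  have hcp : (0 : ℝ) < (d.choose p : ℝ) := by
    exact_mod_cast Nat.choose_pos hp
  -- Common evaluation of the sum of ratios
  have main : (1 / (d : ℝ)) * ∑ s ∈ Finset.Icc 1 d, (((d - s).choose p : ℝ) / (d.choose p : ℝ))
      = ((d : ℝ) - (p : ℝ)) / (((p : ℝ) + 1) * (d : ℝ)) := by
    rw [← Finset.sum_div]
    have hsum : ∑ s ∈ Finset.Icc 1 d, ((d - s).choose p : ℝ) = (d.choose (p + 1) : ℝ) := by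
      exact_mod_cast congrArg (Nat.cast : ℕ → ℝ) (sumD d p)
    rw [hsum]
    have hk := key1 d p
    have hp1 : ((p : ℝ) + 1) ≠ 0 := by positivity
    field_simp
    nlinarith [hk]
  constructor
  · -- probability form
    unfold limeExp
    have hcount : ∀ s ∈ Finset.Icc 1 d,
        ((d.choose s : ℝ))⁻¹ * ∑ S ∈ Finset.univ.filter (fun S : Finset (Fin d) => S.card = s),
          (if ∀ j ∈ J, j ∉ S then (1 : ℝ) else 0)
        = ((d - s).choose p : ℝ) / (d.choose p : ℝ) := by
      intro s hs
      simp only [Finset.mem_Icc] at hs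
      have hcs : (0 : ℝ) < (d.choose s : ℝ) := by exact_mod_cast Nat.choose_pos hs.2
      have hfilter : (Finset.univ.filter (fun S : Finset (Fin d) => S.card = s)).filter
            (fun S => ∀ j ∈ J, j ∉ S) = Finset.powersetCard s Jᶜ := by
        ext S
        simp only [Finset.mem_filter, Finset.mem_univ, true_and, Finset.mem_powersetCard,
          Finset.subset_iff, Finset.mem_compl]
        constructor
        · rintro ⟨hcard, h⟩
          exact ⟨fun x hx hxJ => h x hxJ hx, hcard⟩
        · rintro ⟨h, hcard⟩
          exact ⟨hcard, fun j hj hjS => h hjS hj⟩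
      have hsum : ∑ S ∈ Finset.univ.filter (fun S : Finset (Fin d) => S.card = s),
          (if ∀ j ∈ J, j ∉ S then (1 : ℝ) else 0) = (((d - p).choose s : ℕ) : ℝ) := by
        rw [Finset.sum_boole, hfilter]
        simp [Finset.card_powersetCard, Finset.card_compl, hpdef]
      rw [hsum]
      have hcross := crossLemma d s p
      have hcrossR : (d.choose s : ℝ) * ((d - s).choose p : ℝ)
          = (d.choose p : ℝ) * ((d - p).choose s : ℝ) := by exact_mod_cast hcross
      field_simp
      nlinarith [hcrossR]
    rw [Finset.sum_congr rfl hcount]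
    exact main
  · -- product form
    have hprod : ∀ s ∈ Finset.Icc 1 d,
        ∏ k ∈ Finset.range p, (((d : ℝ) - (s : ℝ) - (k : ℝ)) / ((d : ℝ) - (k : ℝ)))
          = ((d - s).choose p : ℝ) / (d.choose p : ℝ) := by
      intro s hs
      simp only [Finset.mem_Icc] at hs
      exact prodLemma d s p hs.2 hp
    rw [Finset.sum_congr rfl hprod]
    exact main
end
end
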